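/- Let N be odd, a and b binary sequences of period N, η an integer, and w the 4-column interleaved sequence of period 4N with columns (a, L^η(ā), b, L^η(b)). Write τ = 4τ₁+τ₂, 0 ≤ τ₂ ≤ 3. Then R_w(τ) = 2R_a(τ₁)+2R_b(τ₁) if τ₂=0, and R_w(τ) = 0 if τ₂=2. -/

import Mathlib

/-- Periodic cross-correlation of binary sequences of period `M`. -/
def corr (M : ℕ) (x y : ZMod M → ZMod 2) (τ : ZMod M) : ℤ :=
  ∑ t ∈ Finset.range M, (-1 : ℤ) ^ ((x (t : ZMod M)).val + (y ((t : ZMod M) + τ)).val)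

/-- 4-column interleaving: `v(4i+j)` is the `j`-th column evaluated at `i`. -/
def il4 (N : ℕ) (a b c d : ZMod N → ZMod 2) : ZMod (4 * N) → ZMod 2 :=
  fun t => if t.val % 4 = 0 then a ((t.val / 4 : ℕ) : ZMod N)
           else if t.val % 4 = 1 then b ((t.val / 4 : ℕ) : ZMod N)
           else if t.val % 4 = 2 then c ((t.val / 4 : ℕ) : ZMod N)
           else d ((t.val / 4 : ℕ) : ZMod N)

lemma il4_natCast (N : ℕ) (hN : 0 < N) (a b c d : ZMod N → ZMod 2) (n : ℕ) :
    il4 N a b c d (n : ZMod (4*N)) =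
      if n % 4 = 0 then a ((n/4 : ℕ) : ZMod N)
      else if n % 4 = 1 then b ((n/4 : ℕ) : ZMod N)
      else if n % 4 = 2 then c ((n/4 : ℕ) : ZMod N)
      else d ((n/4 : ℕ) : ZMod N) := by
  have : NeZero (4*N) := ⟨by positivity⟩
  have hv : ((n : ZMod (4*N))).val = n % (4*N) := ZMod.val_natCast _ n
  have key : n / 4 = N * (n / (4*N)) + (n % (4*N)) / 4 := by
    conv_lhs => rw [← Nat.div_add_mod n (4*N)]
    rw [mul_assoc, Nat.mul_add_div (by norm_num)]
  have hm : (n % (4*N)) % 4 = n % 4 := Nat.mod_mod_of_dvd n (dvd_mul_right 4 N)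
  have hcast : (((n % (4*N))/4 : ℕ) : ZMod N) = ((n/4 : ℕ) : ZMod N) := by
    rw [key]; push_cast; simp
  unfold il4
  rw [hv, hm, hcast]

lemma il4_eval (N : ℕ) (hN : 0 < N) (a b c d : ZMod N → ZMod 2) (q j : ℕ) (hj : j < 4) :
    il4 N a b c d ((4*q+j : ℕ) : ZMod (4*N)) =
      if j = 0 then a ((q : ℕ) : ZMod N)
      else if j = 1 then b ((q : ℕ) : ZMod N)
      else if j = 2 then c ((q : ℕ) : ZMod N)
      else d ((q : ℕ) : ZMod N) := by
  rw [il4_natCast N hN]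
  have h1 : (4*q+j) % 4 = j := by omega
  have h2 : (4*q+j) / 4 = q := by omega
  rw [h1, h2]

lemma sum_range_zmod {M : ℕ} [NeZero M] (f : ZMod M → ℤ) :
    ∑ t ∈ Finset.range M, f (t : ZMod M) = ∑ x : ZMod M, f x := by
  refine Finset.sum_nbij' (i := fun t => (t : ZMod M)) (j := fun x => x.val) ?_ ?_ ?_ ?_ ?_ <;>
    simp [ZMod.val_natCast, Nat.mod_eq_of_lt, ZMod.val_lt, ZMod.natCast_val]
  intro a ha; exact Nat.mod_eq_of_lt ha

lemma shift_sum {M : ℕ} [NeZero M] (c : ZMod M) (f : ZMod M → ℤ) :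
    ∑ x : ZMod M, f (x + c) = ∑ x : ZMod M, f x :=
  Equiv.sum_comp (Equiv.addRight c) f

lemma sum_range_mul (N : ℕ) (F : ℕ → ℤ) :
    ∑ t ∈ Finset.range (4*N), F t
      = ∑ i ∈ Finset.range N, (F (4*i) + F (4*i+1) + F (4*i+2) + F (4*i+3)) := by
  induction N with
  | zero => simp
  | succ n ih =>
    have h : 4*(n+1) = 4*n+1+1+1+1 := by ring
    rw [Finset.sum_range_succ, ← ih, h, Finset.sum_range_succ, Finset.sum_range_succ,
      Finset.sum_range_succ, Finset.sum_range_succ]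
    have e2 : 4*n+1+1 = 4*n+2 := by ring
    have e3 : 4*n+1+1+1 = 4*n+3 := by ring
    rw [e2, e3]; ring

lemma negneg (u v : ZMod 2) :
    (-1:ℤ) ^ ((1-u).val + (1-v).val) = (-1:ℤ) ^ (u.val + v.val) := by
  revert u v; decide

lemma negone (u v : ZMod 2) :
    (-1:ℤ) ^ ((1-u).val + v.val) = -(-1:ℤ) ^ (u.val + v.val) := by
  revert u v; decide

lemma case0 (N : ℕ) (hN : 0 < N) (a b : ZMod N → ZMod 2) (η : ZMod N) (m : ℕ) :
    corr (4*N) (il4 N a (fun i => 1 - a (i + η)) b (fun i => b (i + η)))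
      (il4 N a (fun i => 1 - a (i + η)) b (fun i => b (i + η))) ((4*m : ℕ) : ZMod (4*N))
      = 2 * corr N a a (m : ZMod N) + 2 * corr N b b (m : ZMod N) := by
  haveI : NeZero N := ⟨hN.ne'⟩
  set w := il4 N a (fun i => 1 - a (i + η)) b (fun i => b (i + η)) with hw
  have corrA : corr N a a (m : ZMod N)
      = ∑ x : ZMod N, (-1:ℤ) ^ ((a x).val + (a (x+(m:ZMod N))).val) := by
    unfold corr
    exact sum_range_zmod (fun x => (-1:ℤ) ^ ((a x).val + (a (x+(m:ZMod N))).val))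
  have corrB : corr N b b (m : ZMod N)
      = ∑ x : ZMod N, (-1:ℤ) ^ ((b x).val + (b (x+(m:ZMod N))).val) := by
    unfold corr
    exact sum_range_zmod (fun x => (-1:ℤ) ^ ((b x).val + (b (x+(m:ZMod N))).val))
  rw [corrA, corrB]
  unfold corr
  simp only [← Nat.cast_add]
  rw [sum_range_mul N (fun t => (-1:ℤ) ^ ((w ↑t).val + (w ↑(t + 4*m)).val))]
  have step : ∀ i ∈ Finset.range N,
      ((-1:ℤ) ^ ((w ↑(4*i)).val + (w ↑(4*i + 4*m)).val)
        + (-1:ℤ) ^ ((w ↑(4*i+1)).val + (w ↑(4*i+1 + 4*m)).val)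
        + (-1:ℤ) ^ ((w ↑(4*i+2)).val + (w ↑(4*i+2 + 4*m)).val)
        + (-1:ℤ) ^ ((w ↑(4*i+3)).val + (w ↑(4*i+3 + 4*m)).val))
      = (fun x => (-1:ℤ) ^ ((a x).val + (a (x+(m:ZMod N))).val)
          + (-1:ℤ) ^ ((a (x+η)).val + (a (x+η+(m:ZMod N))).val)
          + (-1:ℤ) ^ ((b x).val + (b (x+(m:ZMod N))).val)
          + (-1:ℤ) ^ ((b (x+η)).val + (b (x+η+(m:ZMod N))).val)) ((i:ℕ) : ZMod N) := by
    intro i _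
    have e0' : 4*i + 4*m = 4*(i+m)+0 := by ring
    have e1' : 4*i+1 + 4*m = 4*(i+m)+1 := by ring
    have e2' : 4*i+2 + 4*m = 4*(i+m)+2 := by ring
    have e3' : 4*i+3 + 4*m = 4*(i+m)+3 := by ring
    rw [hw, e0', e1', e2', e3',
      il4_natCast N hN _ _ _ _ (4*i),
      il4_eval N hN _ _ _ _ (i+m) 0 (by omega),
      il4_eval N hN _ _ _ _ i 1 (by omega), il4_eval N hN _ _ _ _ (i+m) 1 (by omega),
      il4_eval N hN _ _ _ _ i 2 (by omega), il4_eval N hN _ _ _ _ (i+m) 2 (by omega),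
      il4_eval N hN _ _ _ _ i 3 (by omega), il4_eval N hN _ _ _ _ (i+m) 3 (by omega)]
    simp only [show 4*i % 4 = 0 from by omega, show 4*i/4 = i from by omega]
    norm_num
    push_cast
    rw [negneg, show ((i:ZMod N)+(m:ZMod N)+η) = ((i:ZMod N)+η+(m:ZMod N)) from by ring]
  rw [Finset.sum_congr rfl step,
    sum_range_zmod (fun x => (-1:ℤ) ^ ((a x).val + (a (x+(m:ZMod N))).val)
          + (-1:ℤ) ^ ((a (x+η)).val + (a (x+η+(m:ZMod N))).val)
          + (-1:ℤ) ^ ((b x).val + (b (x+(m:ZMod N))).val)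
          + (-1:ℤ) ^ ((b (x+η)).val + (b (x+η+(m:ZMod N))).val))]
  rw [Finset.sum_add_distrib, Finset.sum_add_distrib, Finset.sum_add_distrib,
    shift_sum η (fun x => (-1:ℤ) ^ ((a x).val + (a (x+(m:ZMod N))).val)),
    shift_sum η (fun x => (-1:ℤ) ^ ((b x).val + (b (x+(m:ZMod N))).val))]
  ring

lemma negone' (u v : ZMod 2) :
    (-1:ℤ) ^ (u.val + (1-v).val) = -(-1:ℤ) ^ (u.val + v.val) := by
  revert u v; decide

lemma case2 (N : ℕ) (hN : 0 < N) (a b : ZMod N → ZMod 2) (η : ZMod N) (m : ℕ) :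
    corr (4*N) (il4 N a (fun i => 1 - a (i + η)) b (fun i => b (i + η)))
      (il4 N a (fun i => 1 - a (i + η)) b (fun i => b (i + η))) ((4*m+2 : ℕ) : ZMod (4*N))
      = 0 := by
  haveI : NeZero N := ⟨hN.ne'⟩
  set w := il4 N a (fun i => 1 - a (i + η)) b (fun i => b (i + η)) with hw
  unfold corr
  simp only [← Nat.cast_add]
  rw [sum_range_mul N (fun t => (-1:ℤ) ^ ((w ↑t).val + (w ↑(t + (4*m+2))).val))]
  have step : ∀ i ∈ Finset.range N,
      ((-1:ℤ) ^ ((w ↑(4*i)).val + (w ↑(4*i + (4*m+2))).val)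
        + (-1:ℤ) ^ ((w ↑(4*i+1)).val + (w ↑(4*i+1 + (4*m+2))).val)
        + (-1:ℤ) ^ ((w ↑(4*i+2)).val + (w ↑(4*i+2 + (4*m+2))).val)
        + (-1:ℤ) ^ ((w ↑(4*i+3)).val + (w ↑(4*i+3 + (4*m+2))).val))
      = (fun x => ((-1:ℤ) ^ ((a x).val + (b (x+(m:ZMod N))).val)
            - (-1:ℤ) ^ ((a (x+η)).val + (b (x+η+(m:ZMod N))).val))
          + ((-1:ℤ) ^ ((b x).val + (a (x+(m:ZMod N)+1)).val)
            - (-1:ℤ) ^ ((b (x+η)).val + (a (x+η+(m:ZMod N)+1)).val))) ((i:ℕ) : ZMod N) := by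
    intro i _
    have e0' : 4*i + (4*m+2) = 4*(i+m)+2 := by ring
    have e1' : 4*i+1 + (4*m+2) = 4*(i+m)+3 := by ring
    have e2' : 4*i+2 + (4*m+2) = 4*(i+m+1)+0 := by ring
    have e3' : 4*i+3 + (4*m+2) = 4*(i+m+1)+1 := by ring
    rw [hw, e0', e1', e2', e3',
      il4_natCast N hN _ _ _ _ (4*i),
      il4_eval N hN _ _ _ _ (i+m) 2 (by omega),
      il4_eval N hN _ _ _ _ i 1 (by omega), il4_eval N hN _ _ _ _ (i+m) 3 (by omega),
      il4_eval N hN _ _ _ _ i 2 (by omega), il4_eval N hN _ _ _ _ (i+m+1) 0 (by omega),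
      il4_eval N hN _ _ _ _ i 3 (by omega), il4_eval N hN _ _ _ _ (i+m+1) 1 (by omega)]
    simp only [show 4*i % 4 = 0 from by omega, show 4*i/4 = i from by omega]
    norm_num
    push_cast
    rw [negone, negone',
      show ((i:ZMod N)+(m:ZMod N)+η) = ((i:ZMod N)+η+(m:ZMod N)) from by ring,
      show ((i:ZMod N)+(m:ZMod N)+1+η) = ((i:ZMod N)+η+(m:ZMod N)+1) from by ring]
    ring
  rw [Finset.sum_congr rfl step,
    sum_range_zmod (fun x => ((-1:ℤ) ^ ((a x).val + (b (x+(m:ZMod N))).val)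
            - (-1:ℤ) ^ ((a (x+η)).val + (b (x+η+(m:ZMod N))).val))
          + ((-1:ℤ) ^ ((b x).val + (a (x+(m:ZMod N)+1)).val)
            - (-1:ℤ) ^ ((b (x+η)).val + (a (x+η+(m:ZMod N)+1)).val))),
    Finset.sum_add_distrib, Finset.sum_sub_distrib, Finset.sum_sub_distrib,
    shift_sum η (fun x => (-1:ℤ) ^ ((a x).val + (b (x+(m:ZMod N))).val)),
    shift_sum η (fun x => (-1:ℤ) ^ ((b x).val + (a (x+(m:ZMod N)+1)).val))]
  ring

theorem stmt_18 (N : ℕ) (hN : Odd N) (a b : ZMod N → ZMod 2) (η : ℤ)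
    (w : ZMod (4 * N) → ZMod 2)
    (hw : w = il4 N a (fun i => 1 - a (i + (η : ZMod N))) b (fun i => b (i + (η : ZMod N))))
    (τ τ₁ τ₂ : ℤ) (hτ : τ = 4 * τ₁ + τ₂) (hτ₂ : 0 ≤ τ₂ ∧ τ₂ ≤ 3) :
    (τ₂ = 0 →
      corr (4 * N) w w (τ : ZMod (4 * N)) =
        2 * corr N a a (τ₁ : ZMod N) + 2 * corr N b b (τ₁ : ZMod N)) ∧
    (τ₂ = 2 → corr (4 * N) w w (τ : ZMod (4 * N)) = 0) := by
  have hNpos : 0 < N := hN.pos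
  haveI : NeZero N := ⟨hNpos.ne'⟩
  set m : ℕ := (τ₁ % (N:ℤ)).toNat with hm
  have hmz : ((m : ℕ) : ℤ) = τ₁ % (N:ℤ) :=
    Int.toNat_of_nonneg (Int.emod_nonneg τ₁ (by exact_mod_cast hNpos.ne'))
  have h1 : ((m : ℕ) : ZMod N) = ((τ₁ : ℤ) : ZMod N) := by
    have := ZMod.intCast_mod τ₁ N
    rw [← this, ← hmz]
    push_cast
    ring
  have hdm : (N:ℤ) * (τ₁ / N) + τ₁ % N = τ₁ := Int.mul_ediv_add_emod τ₁ N
  have h2 : ∀ s : ℕ, τ₂ = (s:ℤ) →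
      ((τ : ℤ) : ZMod (4*N)) = ((4*m+s : ℕ) : ZMod (4*N)) := by
    intro s hs
    have hτval : (τ : ℤ) = ((4*m+s : ℕ) : ℤ) + (4*N) * (τ₁ / N) := by
      push_cast
      rw [hτ, hs]
      linarith [hdm, hmz]
    have h40 : (4 : ZMod (4*N)) * ((N:ℕ) : ZMod (4*N)) = 0 := by
      have := ZMod.natCast_self (4*N)
      push_cast at this
      exact this
    rw [hτval]
    push_cast
    rw [h40, zero_mul, add_zero]
  constructor
  · intro h0
    have := h2 0 (by exact_mod_cast h0)
    rw [show (4*N : ℕ) = 4*N from rfl] at *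
    rw [hw, this, ← h1]
    simpa using case0 N hNpos a b (η : ZMod N) m
  · intro h0
    have := h2 2 (by exact_mod_cast h0)
    rw [hw, this]
    exact case2 N hNpos a b (η : ZMod N) m
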